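/- Let X be a uniform space with uniformity 𝒰_X, and let 𝕍_X := X →₀ ℝ carry a topology 𝒯 that makes 𝕍_X a topological additive group and for which the family ℬ = { W(V, φ) : V ∈ 𝒰_X^ℕ, φ ∈ (ℝ_{>0}^X)^ℕ } of sets defined below is a base of neighbourhoods of zero. Then the canonical map δ : X → (𝕍_X, 𝒯), δ(x) := δ_x, is continuous, where X carries the topology induced by its uniformity. (Indeed, for every x ∈ X and every W = W(V, φ) ∈ ℬ, the neighbourhood δ(x) + W(V, φ) contains δ(V_1[x]), where V_1[x] := { y ∈ X : (x, y) ∈ V_1 }.) -/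

import Mathlib

open Finset

/-- The canonical embedding `δ : X → (X →₀ ℝ)`, `δ x = δ_x`. -/
noncomputable def freeDelta {X : Type*} (x : X) : X →₀ ℝ := Finsupp.single x 1

/-- The set `W(V, φ) ⊆ 𝕍_X = X →₀ ℝ`: the union over `m ≥ 1` of all sums
`∑_{n=1}^m t_n (δ(x_n) − δ(y_n)) + ∑_{n=1}^m s_n δ(u_n)` where for each `1 ≤ n ≤ m`
we have `|t_n| ≤ 1`, `(x_n, y_n) ∈ V_n`, `u_n ∈ X` and `|s_n| ≤ 1 / φ_n (u_n)`. -/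
noncomputable def freeW {X : Type*} (V : ℕ → Set (X × X)) (φ : ℕ → X → ℝ) :
    Set (X →₀ ℝ) :=
  {w : X →₀ ℝ | ∃ m : ℕ, 1 ≤ m ∧ ∃ (t s : ℕ → ℝ) (x y u : ℕ → X),
    (∀ n ∈ Finset.Icc 1 m, |t n| ≤ 1 ∧ (x n, y n) ∈ V n ∧ |s n| ≤ 1 / φ n (u n)) ∧
    w = ∑ n ∈ Finset.Icc 1 m,
      (t n • (freeDelta (x n) - freeDelta (y n)) + s n • freeDelta (u n))}

/-- if `X` is a uniform space and `𝒯` is a topology on `𝕍_X = X →₀ ℝ` making it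
a topological additive group for which the family `{ W(V, φ) }` is a base of neighbourhoods
of zero, then the canonical map `δ : X → (𝕍_X, 𝒯)` is continuous (where `X` carries the
topology induced by its uniformity). -/
theorem stmt6 {X : Type*} [UniformSpace X] (T : TopologicalSpace (X →₀ ℝ))
    (hgrp : @IsTopologicalAddGroup (X →₀ ℝ) T _)
    (hbasis : (@nhds (X →₀ ℝ) T 0).HasBasis
      (fun p : (ℕ → Set (X × X)) × (ℕ → X → ℝ) =>
        (∀ n, p.1 n ∈ uniformity X) ∧ ∀ n x, 0 < p.2 n x)
      (fun p => freeW p.1 p.2)) :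
    @Continuous X (X →₀ ℝ) _ T (fun x => freeDelta x) := by
  letI := T
  rw [continuous_iff_continuousAt]
  intro x
  rw [ContinuousAt, ← tendsto_sub_nhds_zero_iff]
  rw [hbasis.tendsto_right_iff]
  rintro ⟨V, φ⟩ ⟨hV, hφ⟩
  filter_upwards [UniformSpace.ball_mem_nhds x (hV 1)] with y hy
  refine ⟨1, le_refl 1, fun _ => -1, fun _ => 0, fun _ => x, fun _ => y, fun _ => x, ?_, ?_⟩
  · intro n hn
    simp only [Finset.mem_Icc] at hn
    obtain rfl : n = 1 := le_antisymm hn.2 hn.1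
    exact ⟨by simp, hy, by simpa using (one_div_pos.2 (hφ 1 x)).le⟩
  · simp [neg_smul, one_smul]
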